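/- For every partition μ = (μ_1, …, μ_l) and every integer k ≥ 1, p_k^* Q_μ(t) = ∑_{i=1}^{l} Q_{(μ_1, …, μ_{i−1}, μ_i − k, μ_{i+1}, …, μ_l)}(t), where each index sequence on the right is an (in general non-monotone) integer sequence. -/

import Mathlib

open scoped BigOperators

namespace Green

noncomputable section

/-- The base field `F = ℚ(t)`, the field of rational functions in `t`. -/
abbrev FF : Type := RatFunc ℚ

/-- The indeterminate `t ∈ ℚ(t)`. -/
def tF : FF := RatFunc.X

/-- The ring of symmetric functions over `F`, identified with the polynomial ring
`F[p₁, p₂, …]` on the power sums, variables indexed by positive integers. -/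
abbrev SymF : Type := MvPolynomial ℕ+ FF

/-- The power sum `p_n` for `n ≥ 1` (junk value `1` if `n = 0`). -/
def pS (n : ℕ) : SymF := if h : 0 < n then MvPolynomial.X (⟨n, h⟩ : ℕ+) else 1

/-- `p_λ = p_{λ₁} ⋯ p_{λ_l}` for a partition given as a multiset of parts. -/
def pMs (m : Multiset ℕ) : SymF := (m.map pS).prod

/-- `z_λ = ∏_i i^{m_i} · m_i!` where `m_i` is the multiplicity of `i` in `λ`. -/
def zMs (m : Multiset ℕ) : ℕ :=
  m.toFinset.prod fun i => i ^ m.count i * (m.count i).factorial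

/-- `z_λ(t) = z_λ / ∏_j (1 - t^{λ_j})`. -/
def ztMs (m : Multiset ℕ) : FF := (zMs m : FF) / (m.map fun i => 1 - tF ^ i).prod

/-- `q_k`: equal to `0` for `k < 0`, `1` for `k = 0`, and `∑_{ν ⊢ k} z_ν(t)⁻¹ p_ν` for `k ≥ 1`. -/
def qq (k : ℤ) : SymF :=
  if k < 0 then 0
  else ∑ ν : Nat.Partition k.toNat, (ztMs ν.parts)⁻¹ • pMs ν.parts

/-- Coefficients of `(1 - R)(∑_{k≥0} t^k R^k) = 1 + ∑_{k≥1} (t^k - t^{k-1}) R^k`. -/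
def cRO : ℕ → FF
  | 0 => 1
  | k + 1 => tF ^ (k + 1) - tF ^ k

/-- Index pairs `i < j` for the raising operators `R_{ij}`. -/
abbrev PairsLT (l : ℕ) : Type := {pr : Fin l × Fin l // pr.1 < pr.2}

/-- The result of applying `∏_{i<j} R_{ij}^{k_{ij}}` to the integer tuple `α`,
where `R_{ij}` translates the index by `e_i - e_j`. -/
def raised {l : ℕ} (α : Fin l → ℤ) (k : PairsLT l → ℕ) : Fin l → ℤ := fun r =>
  α r + ∑ pr : PairsLT l, (k pr : ℤ) *
    ((if pr.val.1 = r then 1 else 0) - (if pr.val.2 = r then 1 else 0))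

/-- `q_β = q_{β₁} ⋯ q_{β_l}` for an integer tuple `β`. -/
def qTup {l : ℕ} (β : Fin l → ℤ) : SymF := ∏ i, qq (β i)

/-- The Hall–Littlewood function
`Q_α(t) = ∏_{1≤i<j≤l} (1 - R_{ij})(∑_{k≥0} t^k R_{ij}^k) q_α`,
the (finitely supported) expansion of the product of raising-operator series. -/
def QTup {l : ℕ} (α : Fin l → ℤ) : SymF :=
  finsum fun k : PairsLT l → ℕ => (∏ pr, cRO (k pr)) • qTup (raised α k)

/-- `Q_α(t)` for an integer list `α`. -/
def QL (α : List ℤ) : SymF := QTup fun i : Fin α.length => α.get i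

/-- The weakly decreasing sort of a multiset of naturals. -/
def sortDesc (m : Multiset ℕ) : List ℕ := (m.sort (· ≤ ·)).reverse

/-- `Q_λ(t)` for a partition given as a multiset of parts. -/
def QMs (m : Multiset ℕ) : SymF := QL ((sortDesc m).map fun i => (i : ℤ))

/-- The operator `p_k^* = (k/(1 - t^k)) ∂/∂p_k` (junk value `0` for `k = 0`). -/
def pstar (k : ℕ) (f : SymF) : SymF :=
  if h : 0 < k then ((k : FF) / (1 - tF ^ k)) • MvPolynomial.pderiv (⟨k, h⟩ : ℕ+) f else 0

lemma pstar_eq {k : ℕ} (hk : 0 < k) (f : SymF) :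
    pstar k f = ((k : FF) / (1 - tF ^ k)) • MvPolynomial.pderiv (Nat.toPNat k hk) f :=
  dif_pos hk

instance : CharZero FF := charZero_of_injective_algebraMap (algebraMap ℚ FF).injective

lemma tF_pow_ne_one {k : ℕ} (hk : 1 ≤ k) : tF ^ k ≠ 1 := by
  intro h
  have h2 : (algebraMap (Polynomial ℚ) (RatFunc ℚ)) (Polynomial.X ^ k)
      = algebraMap (Polynomial ℚ) (RatFunc ℚ) 1 := by
    simpa [tF, map_pow] using h
  have h3 := RatFunc.algebraMap_injective ℚ h2
  have h4 := congrArg Polynomial.natDegree h3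
  simp [Polynomial.natDegree_X_pow] at h4
  omega

lemma one_sub_tF_pow_ne_zero {k : ℕ} (hk : 1 ≤ k) : (1 : FF) - tF ^ k ≠ 0 :=
  sub_ne_zero.mpr (Ne.symm (tF_pow_ne_one hk))

lemma zMs_cons (a : ℕ) (s : Multiset ℕ) :
    zMs (a ::ₘ s) = a * (s.count a + 1) * zMs s := by
  classical
  unfold zMs
  by_cases h : a ∈ s.toFinset
  · have ht : (a ::ₘ s).toFinset = s.toFinset := by
      rw [Multiset.toFinset_cons, Finset.insert_eq_self.2 h]
    rw [ht, ← Finset.mul_prod_erase _ _ h,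
      ← Finset.mul_prod_erase _ (fun i => i ^ s.count i * (s.count i).factorial) h]
    have hcongr : ∀ i ∈ s.toFinset.erase a,
        i ^ (a ::ₘ s).count i * ((a ::ₘ s).count i).factorial
          = i ^ s.count i * (s.count i).factorial := by
      intro i hi
      rw [Multiset.count_cons_of_ne (Finset.ne_of_mem_erase hi)]
    rw [Finset.prod_congr rfl hcongr, Multiset.count_cons_self, pow_succ,
      Nat.factorial_succ]
    ring
  · have h0 : s.count a = 0 := by
      rw [Multiset.count_eq_zero]
      intro hmem
      exact h (Multiset.mem_toFinset.2 hmem)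
    have ht : (a ::ₘ s).toFinset = insert a s.toFinset := Multiset.toFinset_cons a s
    rw [ht, Finset.prod_insert h]
    have hcongr : ∀ i ∈ s.toFinset,
        i ^ (a ::ₘ s).count i * ((a ::ₘ s).count i).factorial
          = i ^ s.count i * (s.count i).factorial := by
      intro i hi
      rw [Multiset.count_cons_of_ne (by rintro rfl; exact h hi)]
    rw [Finset.prod_congr rfl hcongr, Multiset.count_cons_self, h0]
    simp

lemma zMs_ne_zero {s : Multiset ℕ} (hpos : ∀ i ∈ s, 0 < i) : zMs s ≠ 0 := by
  unfold zMs
  rw [Finset.prod_ne_zero_iff]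
  intro i hi
  have : 0 < i := hpos i (Multiset.mem_toFinset.1 hi)
  positivity

lemma ztMs_inv_cons {k : ℕ} (hk : 1 ≤ k) (s : Multiset ℕ) (hpos : ∀ i ∈ s, 0 < i) :
    ((k : FF) / (1 - tF ^ k)) * (ztMs (k ::ₘ s))⁻¹ * ((s.count k : FF) + 1) = (ztMs s)⁻¹ := by
  have hT : (1 : FF) - tF ^ k ≠ 0 := one_sub_tF_pow_ne_zero hk
  have hk0 : (k : FF) ≠ 0 := Nat.cast_ne_zero.mpr (by omega)
  have hc : ((s.count k : FF) + 1) ≠ 0 := by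
    have : (((s.count k + 1 : ℕ)) : FF) ≠ 0 := Nat.cast_ne_zero.mpr (by omega)
    push_cast at this
    exact this
  have hz : (zMs s : FF) ≠ 0 := Nat.cast_ne_zero.mpr (zMs_ne_zero hpos)
  have hP : ((s.map fun i => 1 - tF ^ i).prod : FF) ≠ 0 := by
    apply Multiset.prod_ne_zero
    intro h0
    rw [Multiset.mem_map] at h0
    obtain ⟨i, hi, hEq⟩ := h0
    exact one_sub_tF_pow_ne_zero (hpos i hi) hEq
  unfold ztMs
  rw [Multiset.map_cons, Multiset.prod_cons, zMs_cons]
  rw [inv_div, inv_div]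
  push_cast
  field_simp

lemma pMs_cons (a : ℕ) (m : Multiset ℕ) : pMs (a ::ₘ m) = pS a * pMs m := by
  rw [pMs, Multiset.map_cons, Multiset.prod_cons]; rfl

lemma pderiv_pS {k : ℕ} (hk : 0 < k) (a : ℕ) :
    MvPolynomial.pderiv (Nat.toPNat k hk) (pS a) = if a = k then 1 else 0 := by
  unfold pS
  rcases Nat.eq_zero_or_pos a with rfl | ha
  · rw [dif_neg (lt_irrefl 0), if_neg (by omega)]
    exact MvPolynomial.pderiv_one
  · rw [dif_pos ha]
    by_cases hak : a = k
    · subst hak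
      rw [if_pos rfl]
      exact MvPolynomial.pderiv_X_self _
    · rw [if_neg hak]
      apply MvPolynomial.pderiv_X_of_ne
      intro hEq
      exact hak (congrArg (fun x : ℕ+ => (x : ℕ)) hEq)

lemma pderiv_pMs {k : ℕ} (hk : 0 < k) (m : Multiset ℕ) :
    MvPolynomial.pderiv (Nat.toPNat k hk) (pMs m) = (m.count k) • pMs (m.erase k) := by
  induction m using Multiset.induction_on with
  | empty => simp [pMs]
  | cons a m ih =>
    rw [pMs_cons, MvPolynomial.pderiv_mul, ih, pderiv_pS hk]
    by_cases hak : a = k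
    · subst hak
      rw [if_pos rfl, Multiset.count_cons_self, Multiset.erase_cons_head]
      have key : (m.count a) • (pS a * pMs (m.erase a)) = (m.count a) • pMs m := by
        rcases Nat.eq_zero_or_pos (m.count a) with h | h
        · simp [h]
        · have ham : a ∈ m := by rwa [← Multiset.count_pos]
          rw [← pMs_cons, Multiset.cons_erase ham]
      rw [mul_smul_comm, key, one_mul, succ_nsmul]
      abel
    · rw [if_neg hak, Multiset.count_cons_of_ne (Ne.symm hak), zero_mul, zero_add,
        mul_smul_comm, ← pMs_cons]
      congr 2
      exact (Multiset.erase_cons_tail m hak).symm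

lemma reindex_sum {k : ℕ} (hk : 1 ≤ k) {n : ℕ} (hkn : k ≤ n) :
    (∑ ν : Nat.Partition n,
        (((k : FF) / (1 - tF ^ k)) * (ztMs ν.parts)⁻¹ * (ν.parts.count k : FF))
          • pMs (ν.parts.erase k))
      = ∑ σ : Nat.Partition (n - k), (ztMs σ.parts)⁻¹ • pMs σ.parts := by
  classical
  rw [← Finset.sum_filter_of_ne
      (p := fun ν : Nat.Partition n => k ∈ ν.parts) (fun ν _ hν => by
        by_contra hmem
        apply hν
        rw [Multiset.count_eq_zero.2 hmem]
        simp)]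
  refine Finset.sum_bij'
    (i := fun ν hν => (⟨ν.parts.erase k,
        fun hi => ν.parts_pos (Multiset.mem_of_mem_erase hi), ?_⟩ : Nat.Partition (n - k)))
    (j := fun σ _ => (⟨k ::ₘ σ.parts, fun hi => ?_, ?_⟩ : Nat.Partition n))
    ?_ ?_ ?_ ?_ ?_
  · -- erase sums to n - k
    have hmem : k ∈ ν.parts := by
      simpa using (Finset.mem_filter.1 hν).2
    have h1 : k + (ν.parts.erase k).sum = n := by
      rw [← Multiset.sum_cons, Multiset.cons_erase hmem, ν.parts_sum]
    omega
  · -- positivity for cons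
    rcases Multiset.mem_cons.1 hi with rfl | h
    · exact hk
    · exact σ.parts_pos h
  · -- cons sums to n
    rw [Multiset.sum_cons, σ.parts_sum]
    omega
  · intro ν hν
    exact Finset.mem_univ _
  · intro σ hσ
    rw [Finset.mem_filter]
    exact ⟨Finset.mem_univ _, Multiset.mem_cons_self _ _⟩
  · intro ν hν
    have hmem : k ∈ ν.parts := by
      simpa using (Finset.mem_filter.1 hν).2
    apply Nat.Partition.ext
    simp [Multiset.cons_erase hmem]
  · intro σ hσ
    apply Nat.Partition.ext
    simp [Multiset.erase_cons_head]
  · intro ν hν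
    have hmem : k ∈ ν.parts := by
      simpa using (Finset.mem_filter.1 hν).2
    have hpos : ∀ i ∈ ν.parts.erase k, 0 < i :=
      fun i hi => ν.parts_pos (Multiset.mem_of_mem_erase hi)
    have hkey := ztMs_inv_cons hk (ν.parts.erase k) hpos
    rw [Multiset.cons_erase hmem] at hkey
    congr 1
    rw [← hkey]
    congr 1
    have : ν.parts.count k = (ν.parts.erase k).count k + 1 := by
      conv_lhs => rw [← Multiset.cons_erase hmem]
      rw [Multiset.count_cons_self]
    rw [this]
    push_cast
    ring

lemma pstar_qq {k : ℕ} (hk : 1 ≤ k) (m : ℤ) : pstar k (qq m) = qq (m - k) := by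
  by_cases hm : m < 0
  · rw [qq, if_pos hm, qq, if_pos (by omega)]
    rw [pstar_eq hk]
    simp
  push_neg at hm
  rw [qq, if_neg (not_lt.2 hm), pstar_eq hk, map_sum, Finset.smul_sum]
  have hterm : ∀ ν : Nat.Partition m.toNat,
      ((k : FF) / (1 - tF ^ k)) •
          MvPolynomial.pderiv (Nat.toPNat k hk) ((ztMs ν.parts)⁻¹ • pMs ν.parts)
        = (((k : FF) / (1 - tF ^ k)) * (ztMs ν.parts)⁻¹ * (ν.parts.count k : FF))
            • pMs (ν.parts.erase k) := by
    intro ν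
    rw [Derivation.map_smul, pderiv_pMs hk, ← Nat.cast_smul_eq_nsmul FF, smul_smul, smul_smul,
      mul_assoc]
  rw [Finset.sum_congr rfl fun ν _ => hterm ν]
  by_cases hmk : m - (k : ℤ) < 0
  · rw [qq, if_pos hmk]
    apply Finset.sum_eq_zero
    intro ν _
    have hc : ν.parts.count k = 0 := by
      rw [Multiset.count_eq_zero]
      intro hmem
      have hle := Multiset.single_le_sum (fun x _ => Nat.zero_le x) k hmem
      rw [ν.parts_sum] at hle
      omega
    rw [hc]
    simp
  · push_neg at hmk
    rw [qq, if_neg (not_lt.2 hmk)]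
    rw [show ((m - (k : ℤ)).toNat) = m.toNat - k by omega]
    exact reindex_sum hk (by omega)

def dec {l : ℕ} (β : Fin l → ℤ) (i : Fin l) (k : ℕ) : Fin l → ℤ :=
  fun r => β r - if r = i then (k : ℤ) else 0

lemma pderiv_finset_prod {ι : Type} [DecidableEq ι] (x : ℕ+) (s : Finset ι) (f : ι → SymF) :
    MvPolynomial.pderiv x (∏ i ∈ s, f i)
      = ∑ i ∈ s, MvPolynomial.pderiv x (f i) * ∏ j ∈ s.erase i, f j := by
  classical
  induction s using Finset.induction_on with
  | empty => simp
  | @insert a s ha ih =>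
    rw [Finset.prod_insert ha, MvPolynomial.pderiv_mul, ih, Finset.sum_insert ha,
      Finset.erase_insert ha, Finset.mul_sum]
    congr 1
    refine Finset.sum_congr rfl fun i hi => ?_
    have hia : i ≠ a := by rintro rfl; exact ha hi
    rw [Finset.erase_insert_of_ne (Ne.symm hia),
      Finset.prod_insert (fun hmem => ha (Finset.mem_of_mem_erase hmem))]
    ring

lemma qTup_dec {l : ℕ} (β : Fin l → ℤ) (i : Fin l) (k : ℕ) :
    qTup (dec β i k) = qq (β i - k) * ∏ j ∈ Finset.univ.erase i, qq (β j) := by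
  unfold qTup
  rw [← Finset.mul_prod_erase _ _ (Finset.mem_univ i)]
  congr 1
  · simp [dec]
  · exact Finset.prod_congr rfl fun j hj => by simp [dec, Finset.ne_of_mem_erase hj]

lemma pstar_qTup {l : ℕ} {k : ℕ} (hk : 1 ≤ k) (β : Fin l → ℤ) :
    pstar k (qTup β) = ∑ i, qTup (dec β i k) := by
  classical
  have main : ((k : FF) / (1 - tF ^ k)) •
        MvPolynomial.pderiv (Nat.toPNat k hk) (∏ i, qq (β i)) = ∑ i, qTup (dec β i k) := by
    have hrw := pderiv_finset_prod (Nat.toPNat k hk) (Finset.univ : Finset (Fin l))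
      (fun i => qq (β i))
    refine (congrArg (fun z : SymF => ((k : FF) / (1 - tF ^ k)) • z) hrw).trans ?_
    rw [Finset.smul_sum]
    refine Finset.sum_congr rfl fun i _ => ?_
    rw [qTup_dec, ← pstar_qq hk (β i), pstar_eq hk, smul_mul_assoc]
  rw [pstar_eq hk]
  exact main

lemma raised_dec {l : ℕ} (α : Fin l → ℤ) (i : Fin l) (k : ℕ) (kk : PairsLT l → ℕ) :
    raised (dec α i k) kk = dec (raised α kk) i k := by
  funext r
  simp only [raised, dec]
  ring

lemma raised_nonneg {l : ℕ} {α : Fin l → ℤ} {kk : PairsLT l → ℕ}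
    (h : qTup (raised α kk) ≠ 0) : ∀ r, 0 ≤ raised α kk r := by
  intro r
  by_contra hr
  push_neg at hr
  apply h
  unfold qTup
  exact Finset.prod_eq_zero (Finset.mem_univ r) (by rw [qq, if_pos hr])

lemma kk_bound {l : ℕ} {α : Fin l → ℤ} {kk : PairsLT l → ℕ}
    (h : ∀ r, 0 ≤ raised α kk r) (pr : PairsLT l) :
    (kk pr : ℤ) ≤ ∑ r, max (α r) 0 := by
  classical
  obtain ⟨⟨i, j⟩, hij⟩ := pr
  set F : Finset (Fin l) := Finset.univ.filter (fun r => j ≤ r) with hF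
  have h0 : (0 : ℤ) ≤ ∑ r ∈ F, raised α kk r := Finset.sum_nonneg fun r _ => h r
  have hexp : ∑ r ∈ F, raised α kk r
      = (∑ r ∈ F, α r) + ∑ pr' : PairsLT l, (kk pr' : ℤ) *
          ((if pr'.val.1 ∈ F then 1 else 0) - (if pr'.val.2 ∈ F then 1 else 0)) := by
    unfold raised
    rw [Finset.sum_add_distrib]
    congr 1
    rw [Finset.sum_comm]
    refine Finset.sum_congr rfl fun pr' _ => ?_
    rw [← Finset.mul_sum]
    congr 1
    rw [Finset.sum_sub_distrib, Finset.sum_ite_eq F pr'.val.1 (fun _ => (1 : ℤ)),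
      Finset.sum_ite_eq F pr'.val.2 (fun _ => (1 : ℤ))]
  have hjF : j ∈ F := by simp [hF]
  have hiF : i ∉ F := by
    simp only [hF, Finset.mem_filter, Finset.mem_univ, true_and]
    exact not_le.2 hij
  have hT : ∑ pr' : PairsLT l, (kk pr' : ℤ) *
        ((if pr'.val.1 ∈ F then 1 else 0) - (if pr'.val.2 ∈ F then 1 else 0))
      ≤ -(kk ⟨(i, j), hij⟩ : ℤ) := by
    have := Finset.sum_ite_eq' Finset.univ (⟨(i, j), hij⟩ : PairsLT l)
      (fun pr' => -(kk pr' : ℤ))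
    rw [if_pos (Finset.mem_univ _)] at this
    rw [← this]
    refine Finset.sum_le_sum fun pr' _ => ?_
    by_cases hpr : pr' = ⟨(i, j), hij⟩
    · subst hpr
      rw [if_pos rfl]
      simp only [hiF, hjF, if_true, if_false]
      ring_nf
      exact le_refl _
    · rw [if_neg hpr]
      apply mul_nonpos_of_nonneg_of_nonpos (by positivity)
      by_cases h1 : pr'.val.1 ∈ F
      · have h2 : pr'.val.2 ∈ F := by
          simp only [hF, Finset.mem_filter, Finset.mem_univ, true_and] at h1 ⊢
          exact le_trans h1 (le_of_lt pr'.2)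
        simp [h1, h2]
      · simp only [if_neg h1]
        split <;> norm_num
  have h1 : (kk ⟨(i, j), hij⟩ : ℤ) ≤ ∑ r ∈ F, α r := by
    rw [hexp] at h0
    linarith
  calc (kk ⟨(i, j), hij⟩ : ℤ) ≤ ∑ r ∈ F, α r := h1
    _ ≤ ∑ r ∈ F, max (α r) 0 := Finset.sum_le_sum fun r _ => le_max_left _ _
    _ ≤ ∑ r, max (α r) 0 := Finset.sum_le_sum_of_subset_of_nonneg
        (Finset.filter_subset _ _) (fun r _ _ => le_max_right _ _)

lemma pstar_QTup {l : ℕ} {k : ℕ} (hk : 1 ≤ k) (α : Fin l → ℤ) :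
    pstar k (QTup α) = ∑ i, QTup (dec α i k) := by
  classical
  set B : ℤ := ∑ r, max (α r) 0 with hB
  set S : Finset (PairsLT l → ℕ) :=
    Fintype.piFinset (fun _ => Finset.range (B.toNat + 1)) with hS
  have hB0 : 0 ≤ B := Finset.sum_nonneg fun r _ => le_max_right _ _
  have hmem : ∀ (β : Fin l → ℤ), (∀ r, β r ≤ α r) → ∀ kk : PairsLT l → ℕ,
      qTup (raised β kk) ≠ 0 → kk ∈ S := by
    intro β hβ kk hne
    rw [hS, Fintype.mem_piFinset]
    intro pr
    rw [Finset.mem_range]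
    have h1 := kk_bound (raised_nonneg hne) pr
    have h2 : ∑ r, max (β r) 0 ≤ B := Finset.sum_le_sum fun r _ => max_le_max (hβ r) le_rfl
    omega
  have hdec : ∀ i : Fin l, ∀ r, dec α i k r ≤ α r := by
    intro i r
    simp only [dec]
    split <;> omega
  have hsub : ∀ (β : Fin l → ℤ), (∀ r, β r ≤ α r) →
      Function.support (fun kk : PairsLT l → ℕ =>
        (∏ pr, cRO (kk pr)) • qTup (raised β kk)) ⊆ ↑S := by
    intro β hβ kk hkk
    apply hmem β hβ kk
    intro h0
    apply hkk
    simp only [Function.mem_support] at *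
    rw [h0, smul_zero]
  have h1 : pstar k (QTup α)
      = ∑ kk ∈ S, pstar k ((∏ pr, cRO (kk pr)) • qTup (raised α kk)) := by
    rw [QTup, finsum_eq_sum_of_support_subset _ (hsub α (fun r => le_rfl)),
      pstar_eq hk, map_sum, Finset.smul_sum]
    refine Finset.sum_congr rfl fun kk _ => ?_
    rw [pstar_eq hk]
  rw [h1]
  have hterm : ∀ kk : PairsLT l → ℕ,
      pstar k ((∏ pr, cRO (kk pr)) • qTup (raised α kk))
        = ∑ i, (∏ pr, cRO (kk pr)) • qTup (raised (dec α i k) kk) := by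
    intro kk
    have hsmul : ∀ (c : FF) (f : SymF), pstar k (c • f) = c • pstar k f := by
      intro c f
      rw [pstar_eq hk, pstar_eq hk,
        Derivation.map_smul, smul_comm]
    rw [hsmul, pstar_qTup hk, Finset.smul_sum]
    refine Finset.sum_congr rfl fun i _ => ?_
    rw [raised_dec]
  rw [Finset.sum_congr rfl (fun kk _ => hterm kk), Finset.sum_comm]
  refine Finset.sum_congr rfl fun i _ => ?_
  rw [QTup]
  exact (finsum_eq_sum_of_support_subset _ (hsub (dec α i k) (hdec i))).symm

lemma QL_eq_QTup {n : ℕ} (lst : List ℤ) (h : lst.length = n) (g : Fin n → ℤ)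
    (hg : ∀ i : Fin n, lst.get (Fin.cast h.symm i) = g i) : QL lst = QTup g := by
  subst h
  unfold QL
  congr 1
  funext i
  exact hg i

lemma map_cast_eq (μ : List ℕ) :
    (μ.map fun x => (x : ℤ)) = List.map (fun x : ℕ => (x : ℤ)) μ := by
  induction μ with
  | nil => rfl
  | cons a l ih => simpa using ih

/-- For a partition `μ = (μ₁, …, μ_l)` and `k ≥ 1`,
`p_k^* Q_μ(t) = ∑_{i=1}^{l} Q_{(μ₁, …, μ_i - k, …, μ_l)}(t)`. -/
theorem statement4 (μ : List ℕ) (hsort : μ.Pairwise (· ≥ ·)) (hpos : ∀ x ∈ μ, 0 < x)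
    (k : ℕ) (hk : 1 ≤ k) :
    pstar k (QL (μ.map fun x => (x : ℤ)))
      = ∑ i : Fin μ.length,
          QL ((μ.map fun x => (x : ℤ)).set i ((μ.get i : ℤ) - k)) := by
  classical
  rw [map_cast_eq μ]
  have hlen : (List.map (fun x : ℕ => (x : ℤ)) μ).length = μ.length := List.length_map _
  have hL : QL (List.map (fun x : ℕ => (x : ℤ)) μ)
      = QTup (fun i : Fin μ.length => (μ.get i : ℤ)) := by
    refine QL_eq_QTup (List.map (fun x : ℕ => (x : ℤ)) μ) hlen _ fun i => ?_
    simp [List.get_eq_getElem, List.getElem_map]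
  rw [hL, pstar_QTup hk]
  refine Finset.sum_congr rfl fun i _ => ?_
  refine (QL_eq_QTup ((List.map (fun x : ℕ => (x : ℤ)) μ).set i ((μ.get i : ℤ) - k))
    (by rw [List.length_set]; exact hlen)
    (dec (fun r : Fin μ.length => (μ.get r : ℤ)) i k) fun j => ?_).symm
  simp only [dec, List.get_eq_getElem, Fin.coe_cast]
  rw [List.getElem_set]
  by_cases hji : j = i
  · subst hji
    rw [if_pos rfl, if_pos rfl]
  · rw [if_neg (fun hv => hji (Fin.ext hv.symm)), if_neg hji, List.getElem_map, sub_zero]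

end
end Green
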